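/- Let σ : V → (0, ∞) be measurable with E[σ(V)²] < ∞, let ϖ ∈ (0,1], and let τ* > 0 satisfy E[min(σ(V)/τ*, 1)] = ϖ. Define ρ*(v) = min(σ(v)/τ*, 1). Then for every measurable ρ : V → (0, 1] with E[ρ(V)] ≤ ϖ, one has E[σ(V)²/ρ(V)] ≥ E[σ(V)²/ρ*(V)]. -/

import Mathlib

open MeasureTheory

lemma key_ineq (s τ r : ℝ) (hs : 0 < s) (hτ : 0 < τ) (hr0 : 0 < r) (hr1 : r ≤ 1) :
    s^2 / min (s/τ) 1 + τ^2 * (min (s/τ) 1 - r) ≤ s^2 / r := by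
  rcases le_or_gt (s/τ) 1 with h | h
  · rw [min_eq_left h]
    have h1 : s^2 / (s/τ) = s * τ := by field_simp
    have h2 : τ^2 * (s/τ) = τ * s := by field_simp
    rw [h1, le_div_iff₀ hr0]
    nlinarith [sq_nonneg (s - τ*r)]
  · rw [min_eq_right h.le, div_one]
    have hsτ : τ ≤ s := ((one_lt_div hτ).mp h).le
    have h2 : τ^2 * r ≤ s^2 := by nlinarith
    rw [le_div_iff₀ hr0]
    nlinarith [mul_nonneg (sub_nonneg.mpr hr1) (sub_nonneg.mpr h2)]

theorem stmt3 {Ω α : Type*} [MeasurableSpace Ω] [MeasurableSpace α]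
    (μ : Measure Ω) [IsProbabilityMeasure μ]
    (V : Ω → α) (hV : Measurable V) (σ : α → ℝ) (hσm : Measurable σ)
    (hσpos : ∀ v, 0 < σ v)
    (hσ2 : ∫⁻ ω, ENNReal.ofReal ((σ (V ω)) ^ 2) ∂μ < ⊤)
    (ϖ : ℝ) (hϖ : ϖ ∈ Set.Ioc (0 : ℝ) 1) (τs : ℝ) (hτ : 0 < τs)
    (hbudget : ∫ ω, min (σ (V ω) / τs) 1 ∂μ = ϖ)
    (ρ : α → ℝ) (hρm : Measurable ρ) (hρ : ∀ v, ρ v ∈ Set.Ioc (0 : ℝ) 1)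
    (hb : ∫ ω, ρ (V ω) ∂μ ≤ ϖ) :
    ∫⁻ ω, ENNReal.ofReal ((σ (V ω)) ^ 2 / min (σ (V ω) / τs) 1) ∂μ ≤
      ∫⁻ ω, ENNReal.ofReal ((σ (V ω)) ^ 2 / ρ (V ω)) ∂μ := by
  have hfm : Measurable (fun ω => σ (V ω)) := hσm.comp hV
  have hρVm : Measurable (fun ω => ρ (V ω)) := hρm.comp hV
  have hminm : Measurable (fun ω => min (σ (V ω) / τs) 1) :=
    (hfm.div_const τs).min measurable_const
  by_cases hR : ∫⁻ ω, ENNReal.ofReal ((σ (V ω)) ^ 2 / ρ (V ω)) ∂μ = ⊤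
  · rw [hR]; exact le_top
  have hg2m : Measurable (fun ω => (σ (V ω))^2 / ρ (V ω)) := (hfm.pow_const 2).div hρVm
  have hg2nn : ∀ ω, 0 ≤ (σ (V ω))^2 / ρ (V ω) :=
    fun ω => div_nonneg (sq_nonneg _) (hρ _).1.le
  have hg2int : Integrable (fun ω => (σ (V ω))^2 / ρ (V ω)) μ := by
    refine ⟨hg2m.aestronglyMeasurable, ?_⟩
    rw [hasFiniteIntegral_iff_ofReal (Filter.Eventually.of_forall hg2nn)]
    exact lt_top_iff_ne_top.mpr hR
  have hρspos : ∀ ω, 0 < min (σ (V ω) / τs) 1 :=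
    fun ω => lt_min (div_pos (hσpos _) hτ) one_pos
  have hg1m : Measurable (fun ω => (σ (V ω))^2 / min (σ (V ω) / τs) 1) :=
    (hfm.pow_const 2).div hminm
  have hg1nn : ∀ ω, 0 ≤ (σ (V ω))^2 / min (σ (V ω) / τs) 1 :=
    fun ω => div_nonneg (sq_nonneg _) (hρspos ω).le
  have hσ2int : Integrable (fun ω => (σ (V ω))^2) μ := by
    refine ⟨(hfm.pow_const 2).aestronglyMeasurable, ?_⟩
    rw [hasFiniteIntegral_iff_ofReal (Filter.Eventually.of_forall fun ω => sq_nonneg _)]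
    exact hσ2
  have hg1le : ∀ ω, (σ (V ω))^2 / min (σ (V ω) / τs) 1 ≤ (σ (V ω))^2 + τs^2 := by
    intro ω
    rcases le_or_gt (σ (V ω) / τs) 1 with h | h
    · rw [min_eq_left h]
      have hs : 0 < σ (V ω) := hσpos _
      have hle : σ (V ω) ≤ τs := (div_le_one hτ).mp h
      have h1 : (σ (V ω))^2 / (σ (V ω) / τs) = σ (V ω) * τs := by field_simp
      rw [h1]; nlinarith
    · rw [min_eq_right h.le, div_one]; nlinarith [sq_nonneg τs]
  have hg1int : Integrable (fun ω => (σ (V ω))^2 / min (σ (V ω) / τs) 1) μ := by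
    refine Integrable.mono' (hσ2int.add (integrable_const (τs^2))) hg1m.aestronglyMeasurable
      (Filter.Eventually.of_forall fun ω => ?_)
    rw [Real.norm_eq_abs, abs_of_nonneg (hg1nn ω)]
    exact hg1le ω
  have hρsint : Integrable (fun ω => min (σ (V ω) / τs) 1) μ := by
    refine Integrable.mono' (integrable_const 1) hminm.aestronglyMeasurable
      (Filter.Eventually.of_forall fun ω => ?_)
    rw [Real.norm_eq_abs, abs_of_nonneg (hρspos ω).le]
    exact min_le_right _ _
  have hρint : Integrable (fun ω => ρ (V ω)) μ := by
    refine Integrable.mono' (integrable_const 1) hρVm.aestronglyMeasurable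
      (Filter.Eventually.of_forall fun ω => ?_)
    rw [Real.norm_eq_abs, abs_of_nonneg (hρ _).1.le]
    exact (hρ _).2
  have key : ∀ ω, (σ (V ω))^2 / min (σ (V ω) / τs) 1
      + τs^2 * (min (σ (V ω) / τs) 1 - ρ (V ω)) ≤ (σ (V ω))^2 / ρ (V ω) :=
    fun ω => key_ineq _ _ _ (hσpos _) hτ (hρ _).1 (hρ _).2
  have haux : Integrable (fun ω => τs^2 * (min (σ (V ω) / τs) 1 - ρ (V ω))) μ := by
    simpa using (hρsint.sub hρint).const_mul (τs^2)
  have hsumint : Integrable (fun ω => (σ (V ω))^2 / min (σ (V ω) / τs) 1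
      + τs^2 * (min (σ (V ω) / τs) 1 - ρ (V ω))) μ := hg1int.add haux
  have hIle : ∫ ω, (σ (V ω))^2 / min (σ (V ω) / τs) 1 ∂μ ≤
      ∫ ω, (σ (V ω))^2 / ρ (V ω) ∂μ := by
    calc ∫ ω, (σ (V ω))^2 / min (σ (V ω) / τs) 1 ∂μ
        ≤ ∫ ω, (σ (V ω))^2 / min (σ (V ω) / τs) 1 ∂μ
            + τs^2 * (ϖ - ∫ ω, ρ (V ω) ∂μ) :=
          le_add_of_nonneg_right (mul_nonneg (sq_nonneg _) (sub_nonneg.mpr hb))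
      _ = ∫ ω, ((σ (V ω))^2 / min (σ (V ω) / τs) 1
            + τs^2 * (min (σ (V ω) / τs) 1 - ρ (V ω))) ∂μ := by
          rw [integral_add hg1int haux,
            integral_const_mul, integral_sub hρsint hρint, hbudget]
      _ ≤ ∫ ω, (σ (V ω))^2 / ρ (V ω) ∂μ :=
          integral_mono hsumint hg2int key
  rw [← ofReal_integral_eq_lintegral_ofReal hg1int (Filter.Eventually.of_forall hg1nn),
    ← ofReal_integral_eq_lintegral_ofReal hg2int (Filter.Eventually.of_forall hg2nn)]
  exact ENNReal.ofReal_le_ofReal hIle
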